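/- Fix integers k ≥ 0 and n ≥ k+4, and let E be the set of 2-element subsets of [n]. The number of orbits of the diagonal action of S_{n−k} on E × E (where σ·(e,f) = (σ·e, σ·f)) equals 3 + 4k + 2k² + C(k,2)·(C(k,2) + 2k + 2), and this number equals (C(k,2)+k+1)² + (k+1)² + 1². -/

import Mathlib

open Finset

/-- The 2-element subsets ("edges") of `[n] = {1,…,n}`, modeled inside `ℕ`. -/
def edgesN (n : ℕ) : Finset (Finset ℕ) := (Finset.Icc 1 n).powersetCard 2

/-- `σ` belongs to the subgroup `S_{n-k} ≤ S_n` (inside `Perm ℕ`): it fixes every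
element of `[k]` pointwise and every element outside `[n]`. -/
def FixPerm (n k : ℕ) (σ : Equiv.Perm ℕ) : Prop :=
  (∀ i ∈ Finset.Icc 1 k, σ i = i) ∧ (∀ i, i ∉ Finset.Icc 1 n → σ i = i)

/-- The action of a permutation of `[n]` on an edge (2-subset) of `[n]`. -/
def permEdge (n : ℕ) (σ : Equiv.Perm ℕ) (g : ↥(edgesN n)) : ↥(edgesN n) :=
  if h : g.1.image σ ∈ edgesN n then ⟨g.1.image σ, h⟩ else g

/-- The orbit of a pair of edges under the diagonal action of `S_{n-k}` on `E × E`. -/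
def pairOrbit (n k : ℕ) (p : ↥(edgesN n) × ↥(edgesN n)) :
    Set (↥(edgesN n) × ↥(edgesN n)) :=
  {q | ∃ σ : Equiv.Perm ℕ, FixPerm n k σ ∧ q = (permEdge n σ p.1, permEdge n σ p.2)}


section Aux
variable {n k : ℕ} {σ τ : Equiv.Perm ℕ}

lemma mem_edgesN {n : ℕ} {e : Finset ℕ} : e ∈ edgesN n ↔ e ⊆ Finset.Icc 1 n ∧ e.card = 2 := by
  simp [edgesN]

lemma FixPerm.one : FixPerm n k 1 := ⟨fun i _ => rfl, fun i _ => rfl⟩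

lemma FixPerm.mem_Icc_iff (hσ : FixPerm n k σ) {x : ℕ} :
    σ x ∈ Finset.Icc 1 n ↔ x ∈ Finset.Icc 1 n := by
  constructor
  · intro h
    by_contra hx
    rw [hσ.2 x hx] at h; exact hx h
  · intro h
    by_contra hx
    have h2 := hσ.2 (σ x) hx
    have := σ.injective h2
    rw [this] at hx; exact hx h

lemma FixPerm.mem_K_iff (hσ : FixPerm n k σ) {x : ℕ} :
    σ x ∈ Finset.Icc 1 k ↔ x ∈ Finset.Icc 1 k := by
  constructor
  · intro h
    have h2 := hσ.1 _ h
    have := σ.injective h2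
    rwa [← this]
  · intro h; rw [hσ.1 x h]; exact h

lemma FixPerm.inv (hσ : FixPerm n k σ) : FixPerm n k σ⁻¹ := by
  constructor
  · intro i hi
    have h := hσ.1 i hi
    have : σ⁻¹ (σ i) = σ⁻¹ i := by rw [h]
    rw [← Equiv.Perm.mul_apply, inv_mul_cancel, Equiv.Perm.one_apply] at this; exact this.symm
  · intro i hi
    have h := hσ.2 i hi
    have : σ⁻¹ (σ i) = σ⁻¹ i := by rw [h]
    rw [← Equiv.Perm.mul_apply, inv_mul_cancel, Equiv.Perm.one_apply] at this; exact this.symm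

lemma FixPerm.mul (hσ : FixPerm n k σ) (hτ : FixPerm n k τ) : FixPerm n k (σ * τ) := by
  constructor
  · intro i hi
    simp only [Equiv.Perm.mul_apply, hτ.1 i hi, hσ.1 i hi]
  · intro i hi
    simp only [Equiv.Perm.mul_apply, hτ.2 i hi, hσ.2 i hi]

lemma FixPerm.image_mem (hσ : FixPerm n k σ) {e : Finset ℕ} (he : e ∈ edgesN n) :
    e.image σ ∈ edgesN n := by
  rw [mem_edgesN] at he ⊢
  constructor
  · intro x hx
    simp only [Finset.mem_image] at hx
    obtain ⟨y, hy, rfl⟩ := hx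
    exact hσ.mem_Icc_iff.2 (he.1 hy)
  · rw [Finset.card_image_of_injective _ σ.injective]; exact he.2

lemma permEdge_coe (hσ : FixPerm n k σ) (g : ↥(edgesN n)) :
    (permEdge n σ g).1 = g.1.image σ := by
  rw [permEdge, dif_pos (hσ.image_mem g.2)]

lemma permEdge_one (g : ↥(edgesN n)) : permEdge n 1 g = g := by
  apply Subtype.ext
  rw [permEdge_coe (FixPerm.one (n := n) (k := 0))]
  simp

lemma permEdge_mul (hσ : FixPerm n k σ) (hτ : FixPerm n k τ) (g : ↥(edgesN n)) :
    permEdge n σ (permEdge n τ g) = permEdge n (σ * τ) g := by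
  apply Subtype.ext
  rw [permEdge_coe hσ, permEdge_coe hτ, permEdge_coe (hσ.mul hτ)]
  rw [Finset.image_image]
  rfl


def invP (n k : ℕ) (p : ↥(edgesN n) × ↥(edgesN n)) : Finset ℕ × Finset ℕ × ℕ :=
  (p.1.1 ∩ Finset.Icc 1 k, p.2.1 ∩ Finset.Icc 1 k,
    ((p.1.1 ∩ p.2.1) \ Finset.Icc 1 k).card)

lemma FixPerm.image_inter_K (hσ : FixPerm n k σ) (s : Finset ℕ) :
    s.image σ ∩ Finset.Icc 1 k = s ∩ Finset.Icc 1 k := by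
  ext x
  simp only [Finset.mem_inter, Finset.mem_image]
  constructor
  · rintro ⟨⟨y, hy, rfl⟩, hk⟩
    have hyk : y ∈ Finset.Icc 1 k := hσ.mem_K_iff.1 hk
    rw [hσ.1 y hyk]
    exact ⟨hy, hyk⟩
  · rintro ⟨hs, hk⟩
    exact ⟨⟨x, hs, hσ.1 x hk⟩, hk⟩

lemma FixPerm.image_sdiff_K (hσ : FixPerm n k σ) (s : Finset ℕ) :
    s.image σ \ Finset.Icc 1 k = (s \ Finset.Icc 1 k).image σ := by
  ext x
  simp only [Finset.mem_sdiff, Finset.mem_image]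
  constructor
  · rintro ⟨⟨y, hy, rfl⟩, hk⟩
    exact ⟨y, ⟨hy, fun hyk => hk (hσ.mem_K_iff.2 hyk)⟩, rfl⟩
  · rintro ⟨y, ⟨hy, hyk⟩, rfl⟩
    exact ⟨⟨y, hy, rfl⟩, fun hk => hyk (hσ.mem_K_iff.1 hk)⟩

lemma invP_perm (hσ : FixPerm n k σ) (p : ↥(edgesN n) × ↥(edgesN n)) :
    invP n k (permEdge n σ p.1, permEdge n σ p.2) = invP n k p := by
  unfold invP
  rw [permEdge_coe hσ, permEdge_coe hσ]
  refine Prod.ext (hσ.image_inter_K _) (Prod.ext (hσ.image_inter_K _) ?_)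
  simp only
  rw [← Finset.image_inter _ _ σ.injective, hσ.image_sdiff_K,
    Finset.card_image_of_injective _ σ.injective]

lemma card_subtype_coe {s : Finset ℕ} (P : ℕ → Prop) [DecidablePred P] :
    Fintype.card {x : ↥s // P x.1} = (s.filter P).card := by
  rw [Fintype.card_subtype, Finset.univ_eq_attach, Finset.filter_attach P s,
    Finset.card_map, Finset.card_attach]

lemma M_filter_eq {s : Finset ℕ} (hs : s ⊆ Finset.Icc 1 n) :
    (Finset.Icc (k+1) n).filter (· ∈ s) = s \ Finset.Icc 1 k := by
  ext y
  simp only [Finset.mem_filter, Finset.mem_sdiff, Finset.mem_Icc]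
  constructor
  · rintro ⟨⟨hy1, _⟩, h3⟩
    exact ⟨h3, by omega⟩
  · rintro ⟨h3, h4⟩
    have := Finset.mem_Icc.1 (hs h3)
    exact ⟨⟨by omega, this.2⟩, h3⟩

lemma fiber_system {s t : Finset ℕ} (hs : s ⊆ Finset.Icc 1 n) (ht : t ⊆ Finset.Icc 1 n) :
    ((Finset.Icc (k+1) n).filter (fun y => y ∈ s ∧ y ∈ t)).card
        = ((s ∩ t) \ Finset.Icc 1 k).card
    ∧ ((Finset.Icc (k+1) n).filter (fun y => y ∈ s ∧ y ∈ t)).card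
        + ((Finset.Icc (k+1) n).filter (fun y => y ∈ s ∧ ¬ y ∈ t)).card
        = (s \ Finset.Icc 1 k).card
    ∧ ((Finset.Icc (k+1) n).filter (fun y => y ∈ s ∧ y ∈ t)).card
        + ((Finset.Icc (k+1) n).filter (fun y => ¬ y ∈ s ∧ y ∈ t)).card
        = (t \ Finset.Icc 1 k).card
    ∧ ((Finset.Icc (k+1) n).filter (fun y => y ∈ s ∧ y ∈ t)).card
        + ((Finset.Icc (k+1) n).filter (fun y => y ∈ s ∧ ¬ y ∈ t)).card
        + ((Finset.Icc (k+1) n).filter (fun y => ¬ y ∈ s ∧ y ∈ t)).card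
        + ((Finset.Icc (k+1) n).filter (fun y => ¬ y ∈ s ∧ ¬ y ∈ t)).card
        = (Finset.Icc (k+1) n).card := by
  classical
  set M := Finset.Icc (k+1) n with hM
  have hst : s ∩ t ⊆ Finset.Icc 1 n := (Finset.inter_subset_left).trans hs
  have hA : M.filter (fun y => y ∈ s ∧ y ∈ t) = (s ∩ t) \ Finset.Icc 1 k := by
    rw [← M_filter_eq hst]
    apply Finset.filter_congr
    intro y _
    simp [Finset.mem_inter]
  have hBs : (M.filter (· ∈ s)).filter (· ∈ t) = M.filter (fun y => y ∈ s ∧ y ∈ t) :=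
    Finset.filter_filter _ _ _
  have hBs' : (M.filter (· ∈ s)).filter (fun y => ¬ y ∈ t)
      = M.filter (fun y => y ∈ s ∧ ¬ y ∈ t) := Finset.filter_filter _ _ _
  have hB := Finset.card_filter_add_card_filter_not
    (s := M.filter (· ∈ s)) (p := (· ∈ t))
  rw [hBs, hBs', M_filter_eq hs] at hB
  have hCs : (M.filter (· ∈ t)).filter (· ∈ s) = M.filter (fun y => y ∈ s ∧ y ∈ t) := by
    rw [Finset.filter_filter]
    apply Finset.filter_congr; intro y _; exact and_comm
  have hCs' : (M.filter (· ∈ t)).filter (fun y => ¬ y ∈ s)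
      = M.filter (fun y => ¬ y ∈ s ∧ y ∈ t) := by
    rw [Finset.filter_filter]
    apply Finset.filter_congr; intro y _; exact and_comm
  have hC := Finset.card_filter_add_card_filter_not
    (s := M.filter (· ∈ t)) (p := (· ∈ s))
  rw [hCs, hCs', M_filter_eq ht] at hC
  have hD0 := Finset.card_filter_add_card_filter_not (s := M) (p := (· ∈ s))
  have hD1 := Finset.card_filter_add_card_filter_not
    (s := M.filter (fun y => ¬ y ∈ s)) (p := (· ∈ t))
  rw [Finset.filter_filter, Finset.filter_filter] at hD1
  rw [M_filter_eq hs] at hD0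
  have hA' := congrArg Finset.card hA
  refine ⟨hA', ?_, ?_, ?_⟩ <;> omega

lemma exists_fixperm {e f e' f' : Finset ℕ}
    (heS : e ⊆ Finset.Icc 1 n) (hfS : f ⊆ Finset.Icc 1 n)
    (heS' : e' ⊆ Finset.Icc 1 n) (hfS' : f' ⊆ Finset.Icc 1 n)
    (h1 : e ∩ Finset.Icc 1 k = e' ∩ Finset.Icc 1 k)
    (h2 : f ∩ Finset.Icc 1 k = f' ∩ Finset.Icc 1 k)
    (hce : e.card = e'.card) (hcf : f.card = f'.card)
    (h3 : ((e ∩ f) \ Finset.Icc 1 k).card = ((e' ∩ f') \ Finset.Icc 1 k).card) :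
    ∃ σ : Equiv.Perm ℕ, FixPerm n k σ ∧ e.image σ = e' ∧ f.image σ = f' := by
  classical
  have hcek : (e ∩ Finset.Icc 1 k).card = (e' ∩ Finset.Icc 1 k).card := by rw [h1]
  have hcfk : (f ∩ Finset.Icc 1 k).card = (f' ∩ Finset.Icc 1 k).card := by rw [h2]
  have hesp := Finset.card_inter_add_card_sdiff e (Finset.Icc 1 k)
  have hesp' := Finset.card_inter_add_card_sdiff e' (Finset.Icc 1 k)
  have hfsp := Finset.card_inter_add_card_sdiff f (Finset.Icc 1 k)
  have hfsp' := Finset.card_inter_add_card_sdiff f' (Finset.Icc 1 k)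
  have he1 : (e \ Finset.Icc 1 k).card = (e' \ Finset.Icc 1 k).card := by omega
  have hf1 : (f \ Finset.Icc 1 k).card = (f' \ Finset.Icc 1 k).card := by omega
  obtain ⟨sA, sB, sC, sD⟩ := fiber_system (k := k) heS hfS
  obtain ⟨sA', sB', sC', sD'⟩ := fiber_system (k := k) heS' hfS'
  set P : ℕ → Bool × Bool := fun y => (decide (y ∈ e), decide (y ∈ f)) with hP
  set P' : ℕ → Bool × Bool := fun y => (decide (y ∈ e'), decide (y ∈ f')) with hP'
  have hfilter : ∀ v : Bool × Bool,
      ((Finset.Icc (k+1) n).filter (fun y => P y = v)).card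
        = ((Finset.Icc (k+1) n).filter (fun y => P' y = v)).card := by
    rintro ⟨a, b⟩
    rcases a <;> rcases b <;>
      simp only [hP, hP', Prod.mk.injEq, decide_eq_true_eq, decide_eq_false_iff_not] <;>
      omega
  have hfib : ∀ v : Bool × Bool,
      Fintype.card {x : ↥(Finset.Icc (k+1) n) // P x.1 = v}
        = Fintype.card {x : ↥(Finset.Icc (k+1) n) // P' x.1 = v} := by
    intro v
    rw [card_subtype_coe (fun y => P y = v), card_subtype_coe (fun y => P' y = v)]
    exact hfilter v
  set τ : ↥(Finset.Icc (k+1) n) ≃ ↥(Finset.Icc (k+1) n) :=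
    Equiv.ofFiberEquiv (f := fun x : ↥(Finset.Icc (k+1) n) => P x.1)
      (g := fun x : ↥(Finset.Icc (k+1) n) => P' x.1)
      (fun v => Fintype.equivOfCardEq (hfib v)) with hτdef
  have hτ : ∀ x : ↥(Finset.Icc (k+1) n), P' (τ x).1 = P x.1 := fun x =>
    Equiv.ofFiberEquiv_map (f := fun x : ↥(Finset.Icc (k+1) n) => P x.1)
      (g := fun x : ↥(Finset.Icc (k+1) n) => P' x.1) _ x
  set σ : Equiv.Perm ℕ :=
    Equiv.Perm.extendDomain τ (Equiv.refl ↥(Finset.Icc (k+1) n)) with hσdef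
  have hout : ∀ x ∉ Finset.Icc (k+1) n, σ x = x := fun x hx =>
    Equiv.Perm.extendDomain_apply_not_subtype τ (Equiv.refl ↥(Finset.Icc (k+1) n)) hx
  have hin : ∀ (x : ℕ) (hx : x ∈ Finset.Icc (k+1) n), σ x = (τ ⟨x, hx⟩).1 := by
    intro x hx
    rw [hσdef]
    simp [Equiv.Perm.extendDomain_apply_subtype τ (Equiv.refl ↥(Finset.Icc (k+1) n)) hx]
  have hfix : FixPerm n k σ := by
    constructor
    · intro i hi
      apply hout
      simp only [Finset.mem_Icc] at hi ⊢
      omega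
    · intro i hi
      apply hout
      simp only [Finset.mem_Icc] at hi ⊢
      omega
  have main : ∀ s s' : Finset ℕ, s ⊆ Finset.Icc 1 n → s ∩ Finset.Icc 1 k = s' ∩ Finset.Icc 1 k →
      s.card = s'.card →
      (∀ (y : ℕ) (hyM : y ∈ Finset.Icc (k+1) n), y ∈ s → ((τ ⟨y, hyM⟩).1 ∈ s')) →
      s.image σ = s' := by
    intro s s' hsS hsK hsc htrans
    apply Finset.eq_of_subset_of_card_le
    · intro x hx
      rw [Finset.mem_image] at hx
      obtain ⟨y, hy, rfl⟩ := hx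
      by_cases hyK : y ∈ Finset.Icc 1 k
      · have hyM : y ∉ Finset.Icc (k+1) n := by
          simp only [Finset.mem_Icc] at hyK ⊢
          omega
        rw [hout y hyM]
        have : y ∈ s' ∩ Finset.Icc 1 k := hsK ▸ Finset.mem_inter.2 ⟨hy, hyK⟩
        exact (Finset.mem_inter.1 this).1
      · have hyM : y ∈ Finset.Icc (k+1) n := by
          have := Finset.mem_Icc.1 (hsS hy)
          simp only [Finset.mem_Icc] at hyK ⊢
          omega
        rw [hin y hyM]
        exact htrans y hyM hy
    · rw [Finset.card_image_of_injective _ σ.injective]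
      omega
  refine ⟨σ, hfix, main e e' heS h1 hce ?_, main f f' hfS h2 hcf ?_⟩
  · intro y hyM hy
    have h5 := congrArg Prod.fst (hτ ⟨y, hyM⟩)
    simp only [hP, hP', decide_eq_decide] at h5
    exact h5.2 hy
  · intro y hyM hy
    have h5 := congrArg Prod.snd (hτ ⟨y, hyM⟩)
    simp only [hP, hP', decide_eq_decide] at h5
    exact h5.2 hy

lemma pairOrbit_eq_of_mem {p q : ↥(edgesN n) × ↥(edgesN n)} (σ : Equiv.Perm ℕ)
    (hσ : FixPerm n k σ) (h : q = (permEdge n σ p.1, permEdge n σ p.2)) :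
    pairOrbit n k p = pairOrbit n k q := by
  ext r
  simp only [pairOrbit, Set.mem_setOf_eq]
  constructor
  · rintro ⟨τ, hτ, rfl⟩
    refine ⟨τ * σ⁻¹, hτ.mul hσ.inv, ?_⟩
    rw [h]
    simp only [permEdge_mul (hτ.mul hσ.inv) hσ, mul_assoc, inv_mul_cancel, mul_one]
  · rintro ⟨τ, hτ, rfl⟩
    refine ⟨τ * σ, hτ.mul hσ, ?_⟩
    rw [h]
    simp only [permEdge_mul hτ hσ]

lemma pairOrbit_eq_iff (p q : ↥(edgesN n) × ↥(edgesN n)) :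
    pairOrbit n k p = pairOrbit n k q ↔ invP n k p = invP n k q := by
  constructor
  · intro h
    have hq : q ∈ pairOrbit n k q :=
      ⟨1, FixPerm.one, by rw [permEdge_one, permEdge_one]⟩
    rw [← h] at hq
    obtain ⟨σ, hσ, hq2⟩ := hq
    rw [hq2]
    exact (invP_perm hσ p).symm
  · intro h
    unfold invP at h
    rw [Prod.ext_iff, Prod.ext_iff] at h
    obtain ⟨h1, h2, h3⟩ := h
    have he := mem_edgesN.1 p.1.2
    have hf := mem_edgesN.1 p.2.2
    have he' := mem_edgesN.1 q.1.2
    have hf' := mem_edgesN.1 q.2.2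
    obtain ⟨σ, hσ, hie, hif⟩ := exists_fixperm he.1 hf.1 he'.1 hf'.1 h1 h2
      (by rw [he.2, he'.2]) (by rw [hf.2, hf'.2]) h3
    refine pairOrbit_eq_of_mem σ hσ ?_
    refine Prod.ext ?_ ?_ <;> apply Subtype.ext
    · rw [permEdge_coe hσ]; exact hie.symm
    · rw [permEdge_coe hσ]; exact hif.symm

lemma range_card :
    Nat.card ↥(Set.range (pairOrbit n k))
      = (Finset.univ.image (invP n k)).card := by
  classical
  have hker : Setoid.ker (pairOrbit n k) = Setoid.ker (invP n k) := by
    apply Setoid.ext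
    intro p q
    exact pairOrbit_eq_iff p q
  calc Nat.card ↥(Set.range (pairOrbit n k))
      = Nat.card (Quotient (Setoid.ker (pairOrbit n k))) :=
        (Nat.card_congr (Setoid.quotientKerEquivRange _)).symm
    _ = Nat.card (Quotient (Setoid.ker (invP n k))) := by rw [hker]
    _ = Nat.card ↥(Set.range (invP n k)) := Nat.card_congr (Setoid.quotientKerEquivRange _)
    _ = (Finset.univ.image (invP n k)).card := by
        rw [← Set.image_univ, ← Finset.coe_univ, ← Finset.coe_image,
          Nat.card_coe_set_eq, Set.ncard_coe_finset]

/-- The target finset of invariants. -/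
def TT (k : ℕ) : Finset (Finset ℕ × Finset ℕ × ℕ) :=
  ((Finset.Icc 1 k).powerset ×ˢ (Finset.Icc 1 k).powerset ×ˢ Finset.range 3).filter
    (fun x => x.1.card + x.2.2 ≤ 2 ∧ x.2.1.card + x.2.2 ≤ 2)

lemma image_invP (hn : k + 4 ≤ n) :
    Finset.univ.image (invP n k) = TT k := by
  classical
  apply Finset.Subset.antisymm
  · intro x hx
    rw [Finset.mem_image] at hx
    obtain ⟨p, _, rfl⟩ := hx
    have he := mem_edgesN.1 p.1.2
    have hf := mem_edgesN.1 p.2.2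
    rw [TT, Finset.mem_filter, Finset.mem_product, Finset.mem_product]
    have hd1 : Disjoint (p.1.1 ∩ Finset.Icc 1 k) ((p.1.1 ∩ p.2.1) \ Finset.Icc 1 k) := by
      rw [Finset.disjoint_left]
      intro a ha ha'
      exact (Finset.mem_sdiff.1 ha').2 (Finset.mem_inter.1 ha).2
    have hd2 : Disjoint (p.2.1 ∩ Finset.Icc 1 k) ((p.1.1 ∩ p.2.1) \ Finset.Icc 1 k) := by
      rw [Finset.disjoint_left]
      intro a ha ha'
      exact (Finset.mem_sdiff.1 ha').2 (Finset.mem_inter.1 ha).2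
    have hu1 : (p.1.1 ∩ Finset.Icc 1 k) ∪ ((p.1.1 ∩ p.2.1) \ Finset.Icc 1 k) ⊆ p.1.1 := by
      apply Finset.union_subset Finset.inter_subset_left
      exact (Finset.sdiff_subset).trans Finset.inter_subset_left
    have hu2 : (p.2.1 ∩ Finset.Icc 1 k) ∪ ((p.1.1 ∩ p.2.1) \ Finset.Icc 1 k) ⊆ p.2.1 := by
      apply Finset.union_subset Finset.inter_subset_left
      exact (Finset.sdiff_subset).trans Finset.inter_subset_right
    have hc1 := Finset.card_le_card hu1
    have hc2 := Finset.card_le_card hu2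
    rw [Finset.card_union_of_disjoint hd1] at hc1
    rw [Finset.card_union_of_disjoint hd2] at hc2
    rw [he.2] at hc1
    rw [hf.2] at hc2
    refine ⟨⟨Finset.mem_powerset.2 Finset.inter_subset_right,
      Finset.mem_powerset.2 Finset.inter_subset_right, ?_⟩, ?_, ?_⟩
    · rw [Finset.mem_range]
      simp only [invP]
      omega
    · exact hc1
    · exact hc2
  · rintro ⟨A, B, t⟩ hx
    rw [TT, Finset.mem_filter, Finset.mem_product, Finset.mem_product] at hx
    obtain ⟨⟨hA, hB, ht⟩, c1, c2⟩ := hx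
    rw [Finset.mem_powerset] at hA hB
    simp only at c1 c2
    rw [Finset.mem_range] at ht
    have hAb : ∀ x ∈ A, 1 ≤ x ∧ x ≤ k := fun x hx => Finset.mem_Icc.1 (hA hx)
    have hBb : ∀ x ∈ B, 1 ≤ x ∧ x ≤ k := fun x hx => Finset.mem_Icc.1 (hB hx)
    set a := A.card with ha
    set b := B.card with hb
    set X := Finset.Icc (k+1) (k+2-a) with hX
    set S := Finset.Icc (k+3-a-t) (k+2-a) with hS
    set F := Finset.Icc (k+3) (k+4-b-t) with hF
    have cX : X.card = 2 - a := by rw [hX, Nat.card_Icc]; omega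
    have cS : S.card = t := by rw [hS, Nat.card_Icc]; omega
    have cF : F.card = 2 - b - t := by rw [hF, Nat.card_Icc]; omega
    have he : A ∪ X ∈ edgesN n := by
      rw [mem_edgesN]
      constructor
      · apply Finset.union_subset
        · intro x hx
          have := hAb x hx
          rw [Finset.mem_Icc]; omega
        · intro x hx
          rw [hX, Finset.mem_Icc] at hx
          rw [Finset.mem_Icc]; omega
      · rw [Finset.card_union_of_disjoint, cX]
        · omega
        · rw [Finset.disjoint_left]
          intro x hx hx'
          have := hAb x hx
          rw [hX, Finset.mem_Icc] at hx'
          omega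
    have hf : B ∪ (S ∪ F) ∈ edgesN n := by
      rw [mem_edgesN]
      constructor
      · apply Finset.union_subset
        · intro x hx
          have := hBb x hx
          rw [Finset.mem_Icc]; omega
        · apply Finset.union_subset <;> intro x hx
          · rw [hS, Finset.mem_Icc] at hx
            rw [Finset.mem_Icc]; omega
          · rw [hF, Finset.mem_Icc] at hx
            rw [Finset.mem_Icc]; omega
      · rw [Finset.card_union_of_disjoint, Finset.card_union_of_disjoint, cS, cF]
        · omega
        · rw [Finset.disjoint_left]
          intro x hx hx'
          rw [hS, Finset.mem_Icc] at hx
          rw [hF, Finset.mem_Icc] at hx'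
          omega
        · rw [Finset.disjoint_left]
          intro x hx hx'
          have := hBb x hx
          rw [Finset.mem_union, hS, hF, Finset.mem_Icc, Finset.mem_Icc] at hx'
          omega
    refine Finset.mem_image.2 ⟨(⟨A ∪ X, he⟩, ⟨B ∪ (S ∪ F), hf⟩), Finset.mem_univ _, ?_⟩
    unfold invP
    simp only
    refine Prod.ext ?_ (Prod.ext ?_ ?_)
    · ext x
      simp only [Finset.mem_inter, Finset.mem_union, Finset.mem_Icc, hX]
      constructor
      · rintro ⟨hx | hx, hk⟩
        · exact hx
        · exact ((by omega : False)).elim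
      · intro hx
        exact ⟨Or.inl hx, hAb x hx⟩
    · ext x
      simp only [Finset.mem_inter, Finset.mem_union, Finset.mem_Icc, hS, hF]
      constructor
      · rintro ⟨hx | (hx | hx), hk⟩
        · exact hx
        · exact ((by omega : False)).elim
        · exact ((by omega : False)).elim
      · intro hx
        exact ⟨Or.inl hx, hBb x hx⟩
    · simp only
      have hkey : ((A ∪ X) ∩ (B ∪ (S ∪ F))) \ Finset.Icc 1 k = S := by
        ext x
        simp only [Finset.mem_sdiff, Finset.mem_inter, Finset.mem_union, Finset.mem_Icc,
          hX, hS, hF]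
        constructor
        · rintro ⟨⟨hx1 | hx1, hx2 | (hx2 | hx2)⟩, hk⟩
          · have := hAb x hx1; omega
          · have := hAb x hx1; omega
          · have := hAb x hx1; omega
          · have := hBb x hx2; omega
          · exact hx2
          · omega
        · intro hx
          refine ⟨⟨Or.inr ?_, Or.inr (Or.inl hx)⟩, ?_⟩ <;> omega
      rw [hkey, cS]
end Aux

section Count
variable {n k : ℕ}

lemma count_small (s : Finset ℕ) (m : ℕ) :
    (s.powerset.filter (fun A => A.card ≤ m)).card
      = ∑ j ∈ Finset.range (m+1), s.card.choose j := by
  classical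
  have h : s.powerset.filter (fun A => A.card ≤ m)
      = (Finset.range (m+1)).biUnion (fun j => s.powersetCard j) := by
    ext A
    simp only [Finset.mem_filter, Finset.mem_powerset, Finset.mem_biUnion, Finset.mem_range,
      Finset.mem_powersetCard, Nat.lt_succ_iff]
    constructor
    · rintro ⟨hsub, hcard⟩
      exact ⟨A.card, hcard, hsub, rfl⟩
    · rintro ⟨j, hj, hsub, rfl⟩
      exact ⟨hsub, hj⟩
  rw [h, Finset.card_biUnion]
  · exact Finset.sum_congr rfl fun j _ => Finset.card_powersetCard j s
  · intro i _ j _ hij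
    simp only [Finset.disjoint_left, Finset.mem_powersetCard]
    rintro A ⟨_, hA⟩ ⟨_, hA'⟩
    exact hij (hA ▸ hA')

lemma count_small_Icc (m : ℕ) :
    (((Finset.Icc 1 k).powerset).filter (fun A => A.card ≤ m)).card
      = ∑ j ∈ Finset.range (m+1), k.choose j := by
  rw [count_small, Nat.card_Icc, Nat.add_sub_cancel]

lemma TT_card :
    (TT k).card = (k.choose 2 + k + 1) ^ 2 + (k + 1) ^ 2 + 1 := by
  classical
  have key : (TT k).card = ∑ t ∈ Finset.range 3, ((TT k).filter (fun x => x.2.2 = t)).card :=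
    Finset.card_eq_sum_card_fiberwise
      (by
        intro x hx
        rw [TT, Finset.mem_coe, Finset.mem_filter, Finset.mem_product, Finset.mem_product] at hx
        exact hx.1.2.2)
  have fib : ∀ t, t < 3 → (TT k).filter (fun x => x.2.2 = t)
      = ((Finset.Icc 1 k).powerset.filter (fun A => A.card ≤ 2 - t))
        ×ˢ (((Finset.Icc 1 k).powerset.filter (fun A => A.card ≤ 2 - t)) ×ˢ {t}) := by
    intro t ht3
    ext ⟨A, B, u⟩
    rw [Finset.mem_filter, TT, Finset.mem_filter, Finset.mem_product, Finset.mem_product,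
      Finset.mem_product, Finset.mem_product, Finset.mem_filter, Finset.mem_filter,
      Finset.mem_singleton, Finset.mem_range]
    simp only
    constructor
    · rintro ⟨⟨⟨hA, hB, hu⟩, hc1, hc2⟩, rfl⟩
      exact ⟨⟨hA, by omega⟩, ⟨hB, by omega⟩, rfl⟩
    · rintro ⟨⟨hA, hc1⟩, ⟨hB, hc2⟩, rfl⟩
      refine ⟨⟨⟨hA, hB, ?_⟩, ?_, ?_⟩, rfl⟩ <;> omega
  have e0 : ∀ t, t < 3 → ((TT k).filter (fun x => x.2.2 = t)).card
      = ((Finset.Icc 1 k).powerset.filter (fun A => A.card ≤ 2 - t)).card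
        * ((Finset.Icc 1 k).powerset.filter (fun A => A.card ≤ 2 - t)).card := by
    intro t ht3
    rw [fib t ht3, Finset.card_product, Finset.card_product, Finset.card_singleton, mul_one]
  rw [key, Finset.sum_range_succ, Finset.sum_range_succ, Finset.sum_range_one,
    e0 0 (by norm_num), e0 1 (by norm_num), e0 2 (by norm_num),
    count_small_Icc, count_small_Icc, count_small_Icc]
  norm_num [Finset.sum_range_succ]
  ring
end Count

/-- **Orbit count.** For `n ≥ k + 4`, the number of orbits of the diagonal action of
`S_{n-k}` on `E × E` equals `3 + 4k + 2k² + C(k,2)(C(k,2) + 2k + 2)`, which equals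
`(C(k,2)+k+1)² + (k+1)² + 1²`. -/
theorem card_pairOrbits (k n : ℕ) (hn : k + 4 ≤ n) :
    Nat.card ↥(Set.range (pairOrbit n k))
        = 3 + 4 * k + 2 * k ^ 2 + Nat.choose k 2 * (Nat.choose k 2 + 2 * k + 2)
      ∧ 3 + 4 * k + 2 * k ^ 2 + Nat.choose k 2 * (Nat.choose k 2 + 2 * k + 2)
        = (Nat.choose k 2 + k + 1) ^ 2 + (k + 1) ^ 2 + 1 ^ 2 := by
  constructor
  · rw [range_card, image_invP hn, TT_card]
    ring
  · ring
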